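/- Let ρ₁, ρ₂ > 0. For every (ℓ, h) ∈ ℝ² there exist (x, y, z) ∈ ℝ³ with x² + y² + z² = 1 and z ≠ 0, and (u, v) ∈ ℝ², such that ρ₁·log|z| + (ρ₂/2)(u² + v²) = ℓ and (x·u + y·v)/2 = h. That is, the momentum map (L,H) of the b-coupled spin-oscillator is surjective onto ℝ². -/

import Mathlib

/-- The momentum map `(L,H)` of the b-coupled spin-oscillator is surjective
onto `ℝ²`. -/
theorem bCSO_momentum_map_surjective (ρ₁ ρ₂ : ℝ) (hρ₁ : 0 < ρ₁) (hρ₂ : 0 < ρ₂)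
    (ℓ h : ℝ) :
    ∃ x y z u v : ℝ, x ^ 2 + y ^ 2 + z ^ 2 = 1 ∧ z ≠ 0 ∧
      ρ₁ * Real.log |z| + (ρ₂ / 2) * (u ^ 2 + v ^ 2) = ℓ ∧
      (x * u + y * v) / 2 = h := by
  set z : ℝ := min (1/2) (Real.exp ((ℓ - (8/3) * ρ₂ * h ^ 2) / ρ₁)) with hz_def
  have hz_pos : 0 < z := lt_min (by norm_num) (Real.exp_pos _)
  have hz_le : z ≤ 1/2 := min_le_left _ _
  have hz_lt1 : z < 1 := lt_of_le_of_lt hz_le (by norm_num)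
  have hz2 : z ^ 2 ≤ 1/4 := by
    have : z ^ 2 ≤ (1/2) ^ 2 := pow_le_pow_left₀ hz_pos.le hz_le 2
    linarith
  have hy2pos : (0:ℝ) < 1 - z ^ 2 := by nlinarith
  set y : ℝ := Real.sqrt (1 - z ^ 2) with hy_def
  have hy_sq : y ^ 2 = 1 - z ^ 2 := Real.sq_sqrt hy2pos.le
  have hy_pos : 0 < y := Real.sqrt_pos.mpr hy2pos
  set v : ℝ := 2 * h / y with hv_def
  -- bound on v²
  have hv_sq : v ^ 2 = 4 * h ^ 2 / (1 - z ^ 2) := by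
    rw [hv_def, div_pow, hy_sq]; ring_nf
  have hv_bound : (ρ₂ / 2) * v ^ 2 ≤ (8/3) * ρ₂ * h ^ 2 := by
    rw [hv_sq]
    rw [show ρ₂ / 2 * (4 * h ^ 2 / (1 - z ^ 2)) = (2 * ρ₂ * h ^ 2) / (1 - z ^ 2) by ring]
    rw [div_le_iff₀ hy2pos]
    nlinarith [mul_le_mul_of_nonneg_left hz2 (mul_nonneg hρ₂.le (sq_nonneg h))]
  -- log bound
  have hlog : ρ₁ * Real.log z ≤ ℓ - (8/3) * ρ₂ * h ^ 2 := by
    have h1 : z ≤ Real.exp ((ℓ - (8/3) * ρ₂ * h ^ 2) / ρ₁) := min_le_right _ _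
    have h2 : Real.log z ≤ (ℓ - (8/3) * ρ₂ * h ^ 2) / ρ₁ := by
      calc Real.log z ≤ Real.log (Real.exp ((ℓ - (8/3) * ρ₂ * h ^ 2) / ρ₁)) :=
            Real.log_le_log hz_pos h1
        _ = (ℓ - (8/3) * ρ₂ * h ^ 2) / ρ₁ := Real.log_exp _
    calc ρ₁ * Real.log z ≤ ρ₁ * ((ℓ - (8/3) * ρ₂ * h ^ 2) / ρ₁) :=
          mul_le_mul_of_nonneg_left h2 hρ₁.le
      _ = ℓ - (8/3) * ρ₂ * h ^ 2 := by field_simp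
  have hrem : 0 ≤ ℓ - ρ₁ * Real.log z - (ρ₂ / 2) * v ^ 2 := by linarith
  set u : ℝ := Real.sqrt ((2 / ρ₂) * (ℓ - ρ₁ * Real.log z - (ρ₂ / 2) * v ^ 2)) with hu_def
  have hu_sq : u ^ 2 = (2 / ρ₂) * (ℓ - ρ₁ * Real.log z - (ρ₂ / 2) * v ^ 2) := by
    rw [hu_def]; exact Real.sq_sqrt (by positivity)
  refine ⟨0, y, z, u, v, ?_, ne_of_gt hz_pos, ?_, ?_⟩
  · rw [hy_sq]; ring
  · rw [abs_of_pos hz_pos, hu_sq]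
    field_simp
    ring
  · rw [hv_def]
    field_simp
    ring
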